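/- Let G be a group with a right action r on a type F, let g be a G-transition on (U, j) over a base type B, and let E = (F × U)/~ be the quotient of F × U by the relation ~, with quotient map ⟦·⟧. Then there is a well-defined function p : E → B with p ⟦(w, x)⟧ = j x for all w, x, and the map from F × U to {(x, e) in U × E : j x = p e} sending (w, x) to (x, ⟦(w, x)⟧) is a bijection. Moreover, if j is surjective, then the data (U, j, g, E, p, ⟦·⟧) constitute a G-bundle over B with fibre F (associated with the transition g). -/

import Mathlib

universe u

/-- A right action of a group `G` on a type `F`. -/
structure RightAction (G : Type u) [Group G] (F : Type u) where
  r : F → G → F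
  r_one : ∀ w : F, r w 1 = w
  r_mul : ∀ (w : F) (a c : G), r (r w a) c = r w (a * c)

/-- A `G`-transition on a cover `j : U → B`. -/
structure GTransition (G : Type u) [Group G] {U B : Type u} (j : U → B) where
  g : ∀ x y : U, j x = j y → G
  cocycle : ∀ (x y z : U) (hxy : j x = j y) (hyz : j y = j z),
    g x y hxy * g y z hyz = g x z (hxy.trans hyz)

/-- The relation `(w, x) ~ (v, y) iff j x = j y and v = r w (g x y)` on `F × U`. -/
def bundleRel {G F U B : Type u} [Group G] (ρ : RightAction G F) {j : U → B}
    (t : GTransition G j) : F × U → F × U → Prop :=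
  fun p q => ∃ h : j p.2 = j q.2, q.1 = ρ.r p.1 (t.g p.2 q.2 h)

/-- The data `(U, j, g, E, p, j̃)` constitute a `G`-bundle over `B` with fibre `F`. -/
structure IsGBundle {G B F U E : Type u} [Group G] (ρ : RightAction G F)
    {j : U → B} (t : GTransition G j) (p : E → B) (jt : F × U → E) : Prop where
  j_surj : Function.Surjective j
  p_jt : ∀ (w : F) (x : U), p (jt (w, x)) = j x
  jt_inj : Function.Injective fun wx : F × U => (wx.2, jt wx)
  jt_range : Set.range (fun wx : F × U => (wx.2, jt wx)) = {xe : U × E | j xe.1 = p xe.2}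
  theta : ∀ (w : F) (x y : U) (h : j x = j y), jt (ρ.r w (t.g x y h), y) = jt (w, x)

section Aux
variable {G F U B : Type u} [Group G] (ρ : RightAction G F) {j : U → B} (t : GTransition G j)

lemma g_self (x : U) (h : j x = j x) : t.g x x h = 1 := by
  have h1 := t.cocycle x x x h h
  have : t.g x x h * t.g x x h = t.g x x h := by convert h1 using 2
  exact mul_eq_left.mp this

lemma g_inv (x y : U) (h : j x = j y) : t.g y x h.symm = (t.g x y h)⁻¹ := by
  have h1 := t.cocycle x y x h h.symm
  rw [g_self] at h1
  exact eq_inv_of_mul_eq_one_right h1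

lemma bundleRel_equiv : Equivalence (bundleRel ρ t) := by
  constructor
  · rintro ⟨w, x⟩
    exact ⟨rfl, by rw [g_self, ρ.r_one]⟩
  · rintro ⟨w, x⟩ ⟨v, y⟩ ⟨h, hv⟩
    refine ⟨h.symm, ?_⟩
    rw [hv, ρ.r_mul, t.cocycle, g_self, ρ.r_one]
  · rintro ⟨w, x⟩ ⟨v, y⟩ ⟨u, z⟩ ⟨h1, hv⟩ ⟨h2, hu⟩
    refine ⟨h1.trans h2, ?_⟩
    rw [hu, hv, ρ.r_mul, t.cocycle]

lemma quot_eq_iff (a b : F × U) :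
    Quot.mk (bundleRel ρ t) a = Quot.mk (bundleRel ρ t) b ↔ bundleRel ρ t a b := by
  rw [Quot.eq]
  exact (bundleRel_equiv ρ t).eqvGen_iff

end Aux

/-- on the quotient `E = (F × U)/~` there is a well-defined projection
`p` with `p ⟦(w, x)⟧ = j x`, the map `(w, x) ↦ (x, ⟦(w, x)⟧)` is a bijection from
`F × U` onto `{(x, e) | j x = p e}`, and if `j` is surjective then the data
constitute a `G`-bundle over `B` with fibre `F` associated with `g`. -/
theorem stmt2 {G F U B : Type u} [Group G] (ρ : RightAction G F)
    {j : U → B} (t : GTransition G j) :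
    ∃ p : Quot (bundleRel ρ t) → B,
      (∀ (w : F) (x : U), p (Quot.mk (bundleRel ρ t) (w, x)) = j x) ∧
      Function.Injective (fun wx : F × U => (wx.2, Quot.mk (bundleRel ρ t) wx)) ∧
      Set.range (fun wx : F × U => (wx.2, Quot.mk (bundleRel ρ t) wx)) =
        {xe : U × Quot (bundleRel ρ t) | j xe.1 = p xe.2} ∧
      (Function.Surjective j →
        IsGBundle ρ t p (fun wx : F × U => Quot.mk (bundleRel ρ t) wx)) := by
  refine ⟨Quot.lift (fun wx => j wx.2) (fun a b h => h.1), fun w x => rfl, ?_, ?_, ?_⟩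
  · rintro ⟨w, x⟩ ⟨v, y⟩ h
    simp only [Prod.mk.injEq] at h
    obtain ⟨rfl, h2⟩ := h
    obtain ⟨hj, hv⟩ := (quot_eq_iff ρ t _ _).mp h2
    rw [g_self, ρ.r_one] at hv
    simp only at hv
    rw [hv]
  · ext ⟨x, e⟩
    simp only [Set.mem_range, Set.mem_setOf_eq, Prod.mk.injEq]
    constructor
    · rintro ⟨⟨w, y⟩, rfl, rfl⟩; rfl
    · rintro hx
      obtain ⟨⟨v, y⟩, rfl⟩ := Quot.exists_rep e
      have hj : j x = j y := hx
      refine ⟨(ρ.r v (t.g y x hj.symm), x), rfl, ?_⟩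
      apply Quot.sound
      exact ⟨hj, by rw [ρ.r_mul, t.cocycle, g_self, ρ.r_one]⟩
  · intro hsurj
    refine ⟨hsurj, fun w x => rfl, ?_, ?_, ?_⟩
    · rintro ⟨w, x⟩ ⟨v, y⟩ h
      simp only [Prod.mk.injEq] at h
      obtain ⟨rfl, h2⟩ := h
      obtain ⟨hj, hv⟩ := (quot_eq_iff ρ t _ _).mp h2
      rw [g_self, ρ.r_one] at hv
      simp only at hv
      rw [hv]
    · ext ⟨x, e⟩
      simp only [Set.mem_range, Set.mem_setOf_eq, Prod.mk.injEq]
      constructor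
      · rintro ⟨⟨w, y⟩, rfl, rfl⟩; rfl
      · rintro hx
        obtain ⟨⟨v, y⟩, rfl⟩ := Quot.exists_rep e
        have hj : j x = j y := hx
        refine ⟨(ρ.r v (t.g y x hj.symm), x), rfl, ?_⟩
        apply Quot.sound
        exact ⟨hj, by rw [ρ.r_mul, t.cocycle, g_self, ρ.r_one]⟩
    · intro w x y h
      exact (Quot.sound ⟨h, rfl⟩).symm
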